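/- Collatz–Wielandt bounds: let M be an n×n matrix with nonnegative entries and let x be a vector with all entries strictly positive. Then min_i ((Mx)_i / x_i) ≤ ρ(M) ≤ max_i ((Mx)_i / x_i), where ρ(M) is the spectral radius of M. -/

import Mathlib

open Filter Finset Topology

attribute [local instance] Matrix.linftyOpNormedRing Matrix.linftyOpNormedAlgebra
  Matrix.linfty_opNormOneClass

private lemma aux_rpow_tendsto_one (c : ℝ) (hc : 0 < c) :
    Tendsto (fun k : ℕ => c ^ ((1 : ℝ) / k)) atTop (𝓝 1) := by
  have h1 : Tendsto (fun k : ℕ => (1 : ℝ) / k) atTop (𝓝 0) :=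
    tendsto_one_div_atTop_nhds_zero_nat
  have h2 : Tendsto (fun k : ℕ => Real.log c * ((1 : ℝ) / k)) atTop (𝓝 0) := by
    simpa using h1.const_mul (Real.log c)
  have h3 := (Real.continuous_exp.continuousAt (x := (0:ℝ))).tendsto.comp h2
  rw [Real.exp_zero] at h3
  refine h3.congr fun k => ?_
  simp [Real.rpow_def_of_pos hc, Function.comp]

/-- The spectral radius of a real matrix, as the spectral radius of its
complexification: the supremum of absolute values of its complex eigenvalues. -/
noncomputable def specRad (n : ℕ) (M : Matrix (Fin n) (Fin n) ℝ) : ℝ :=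
  (spectralRadius ℂ (M.map (algebraMap ℝ ℂ))).toReal

theorem stmt_11 (n : ℕ) (hn : 0 < n) (M : Matrix (Fin n) (Fin n) ℝ)
    (hM : ∀ i j, 0 ≤ M i j) (x : Fin n → ℝ) (hx : ∀ i, 0 < x i) :
    Finset.univ.inf' ⟨⟨0, hn⟩, Finset.mem_univ _⟩ (fun i => M.mulVec x i / x i)
        ≤ specRad n M ∧
      specRad n M ≤
        Finset.univ.sup' ⟨⟨0, hn⟩, Finset.mem_univ _⟩ (fun i => M.mulVec x i / x i) := by
  haveI : Nonempty (Fin n) := ⟨⟨0, hn⟩⟩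
  haveI : CompleteSpace (Matrix (Fin n) (Fin n) ℂ) := FiniteDimensional.complete ℂ _
  set H : (Finset.univ : Finset (Fin n)).Nonempty := ⟨⟨0, hn⟩, Finset.mem_univ _⟩
  set s := Finset.univ.inf' H (fun i => M.mulVec x i / x i) with hs_def
  set r := Finset.univ.sup' H (fun i => M.mulVec x i / x i) with hr_def
  -- basic positivity facts
  have hmv : ∀ (A : Matrix (Fin n) (Fin n) ℝ) (y : Fin n → ℝ) (i : Fin n),
      A.mulVec y i = ∑ j, A i j * y j := by
    intro A y i; simp [Matrix.mulVec, dotProduct]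
  have hMxnn : ∀ i, 0 ≤ M.mulVec x i := by
    intro i; rw [hmv]
    exact Finset.sum_nonneg fun j _ => mul_nonneg (hM i j) (hx j).le
  have hs0 : 0 ≤ s :=
    Finset.le_inf' H _ fun i _ => div_nonneg (hMxnn i) (hx i).le
  have hsr : s ≤ r :=
    le_trans (Finset.inf'_le (fun i => M.mulVec x i / x i) (Finset.mem_univ (⟨0, hn⟩ : Fin n)))
      (Finset.le_sup' (fun i => M.mulVec x i / x i) (Finset.mem_univ (⟨0, hn⟩ : Fin n)))
  have hr0 : 0 ≤ r := hs0.trans hsr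
  have hMxle : ∀ i, M.mulVec x i ≤ r * x i := by
    intro i
    have h := Finset.le_sup' (fun i => M.mulVec x i / x i) (Finset.mem_univ i)
    rw [div_le_iff₀ (hx i)] at h
    exact h
  have hMxge : ∀ i, s * x i ≤ M.mulVec x i := by
    intro i
    have h := Finset.inf'_le (fun i => M.mulVec x i / x i) (Finset.mem_univ i)
    rwa [le_div_iff₀ (hx i)] at h
  -- min and max of x
  set a := Finset.univ.inf' H x with ha_def
  set b := Finset.univ.sup' H x with hb_def
  have ha0 : 0 < a := (Finset.lt_inf'_iff H).mpr fun i _ => hx i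
  have hb0 : 0 < b := ha0.trans_le
    (le_trans (Finset.inf'_le x (Finset.mem_univ (⟨0, hn⟩ : Fin n)))
      (Finset.le_sup' x (Finset.mem_univ (⟨0, hn⟩ : Fin n))))
  have hax : ∀ i, a ≤ x i := fun i => Finset.inf'_le _ (Finset.mem_univ i)
  have hxb : ∀ i, x i ≤ b := fun i => Finset.le_sup' _ (Finset.mem_univ i)
  -- entries of powers are nonnegative
  have hpownn : ∀ k i j, 0 ≤ (M ^ k) i j := by
    intro k
    induction k with
    | zero => intro i j; simp [Matrix.one_apply]; positivity
    | succ k ih =>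
      intro i j
      rw [pow_succ, Matrix.mul_apply]
      exact Finset.sum_nonneg fun l _ => mul_nonneg (ih i l) (hM l j)
  -- power bounds on mulVec
  have hpowle : ∀ k i, (M ^ k).mulVec x i ≤ r ^ k * x i := by
    intro k
    induction k with
    | zero => intro i; simp [Matrix.one_mulVec]
    | succ k ih =>
      intro i
      rw [pow_succ', ← Matrix.mulVec_mulVec]
      calc M.mulVec ((M ^ k).mulVec x) i
          = ∑ j, M i j * (M ^ k).mulVec x j := hmv _ _ i
        _ ≤ ∑ j, M i j * (r ^ k * x j) :=
            Finset.sum_le_sum fun j _ => mul_le_mul_of_nonneg_left (ih j) (hM i j)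
        _ = r ^ k * M.mulVec x i := by
            rw [hmv, Finset.mul_sum]; exact Finset.sum_congr rfl fun j _ => by ring
        _ ≤ r ^ k * (r * x i) :=
            mul_le_mul_of_nonneg_left (hMxle i) (pow_nonneg hr0 k)
        _ = r ^ (k + 1) * x i := by ring
  have hpowge : ∀ k i, s ^ k * x i ≤ (M ^ k).mulVec x i := by
    intro k
    induction k with
    | zero => intro i; simp [Matrix.one_mulVec]
    | succ k ih =>
      intro i
      rw [pow_succ' M k, ← Matrix.mulVec_mulVec]
      calc s ^ (k + 1) * x i = s ^ k * (s * x i) := by ring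
        _ ≤ s ^ k * M.mulVec x i :=
            mul_le_mul_of_nonneg_left (hMxge i) (pow_nonneg hs0 k)
        _ = ∑ j, M i j * (s ^ k * x j) := by
            rw [hmv, Finset.mul_sum]; exact Finset.sum_congr rfl fun j _ => by ring
        _ ≤ ∑ j, M i j * (M ^ k).mulVec x j :=
            Finset.sum_le_sum fun j _ => mul_le_mul_of_nonneg_left (ih j) (hM i j)
        _ = M.mulVec ((M ^ k).mulVec x) i := (hmv _ _ i).symm
  -- norm of complexified nonneg matrix is sup' of row sums
  have hnorm : ∀ (A : Matrix (Fin n) (Fin n) ℝ), (∀ i j, 0 ≤ A i j) →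
      ‖A.map (algebraMap ℝ ℂ)‖ = Finset.univ.sup' H (fun i => ∑ j, A i j) := by
    intro A hA
    rw [Matrix.linfty_opNorm_def]
    rw [← Finset.sup'_eq_sup H]
    rw [Finset.comp_sup'_eq_sup'_comp H (fun y : NNReal => (y : ℝ))
      (fun p q => by exact NNReal.coe_max p q)]
    refine Finset.sup'_congr H rfl fun i _ => ?_
    simp only [Function.comp]
    push_cast
    refine Finset.sum_congr rfl fun j _ => ?_
    simp [Matrix.map_apply, Complex.norm_real, abs_of_nonneg (hA i j)]
  -- complexification of powers
  have hmapow : ∀ k : ℕ, (M.map (algebraMap ℝ ℂ)) ^ k = (M ^ k).map (algebraMap ℝ ℂ) := by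
    intro k
    rw [← RingHom.mapMatrix_apply, ← RingHom.mapMatrix_apply, ← map_pow]
  -- bounds on norms of powers
  have hnle : ∀ k : ℕ, ‖(M.map (algebraMap ℝ ℂ)) ^ k‖ ≤ r ^ k * (b / a) := by
    intro k
    rw [hmapow, hnorm _ (hpownn k)]
    refine Finset.sup'_le H _ fun i _ => ?_
    have h1 : (∑ j, (M ^ k) i j) * a ≤ r ^ k * b := by
      calc (∑ j, (M ^ k) i j) * a = ∑ j, (M ^ k) i j * a := by rw [Finset.sum_mul]
        _ ≤ ∑ j, (M ^ k) i j * x j :=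
            Finset.sum_le_sum fun j _ => mul_le_mul_of_nonneg_left (hax j) (hpownn k i j)
        _ = (M ^ k).mulVec x i := (hmv _ _ i).symm
        _ ≤ r ^ k * x i := hpowle k i
        _ ≤ r ^ k * b := mul_le_mul_of_nonneg_left (hxb i) (pow_nonneg hr0 k)
    rw [← mul_div_assoc]
    exact (le_div_iff₀ ha0).mpr h1
  have hnge : ∀ k : ℕ, s ^ k * (a / b) ≤ ‖(M.map (algebraMap ℝ ℂ)) ^ k‖ := by
    intro k
    rw [hmapow, hnorm _ (hpownn k)]
    have i0 : Fin n := ⟨0, hn⟩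
    refine le_trans ?_ (Finset.le_sup' _ (Finset.mem_univ i0))
    have h1 : s ^ k * a ≤ (∑ j, (M ^ k) i0 j) * b := by
      calc s ^ k * a ≤ s ^ k * x i0 :=
            mul_le_mul_of_nonneg_left (hax i0) (pow_nonneg hs0 k)
        _ ≤ (M ^ k).mulVec x i0 := hpowge k i0
        _ = ∑ j, (M ^ k) i0 j * x j := hmv _ _ i0
        _ ≤ ∑ j, (M ^ k) i0 j * b :=
            Finset.sum_le_sum fun j _ => mul_le_mul_of_nonneg_left (hxb j) (hpownn k i0 j)
        _ = (∑ j, (M ^ k) i0 j) * b := by rw [Finset.sum_mul]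
    rw [← mul_div_assoc]
    exact (div_le_iff₀ hb0).mpr h1
  -- Gelfand's formula, real version
  set Mc := M.map (algebraMap ℝ ℂ) with hMc
  have hgel := spectrum.pow_nnnorm_pow_one_div_tendsto_nhds_spectralRadius Mc
  have hfin : spectralRadius ℂ Mc ≠ ⊤ :=
    (lt_of_le_of_lt (spectrum.spectralRadius_le_nnnorm (𝕜 := ℂ) Mc) ENNReal.coe_lt_top).ne
  have hreal : Tendsto (fun k : ℕ => ‖Mc ^ k‖ ^ ((1:ℝ) / k)) atTop (𝓝 (specRad n M)) := by
    have := (ENNReal.tendsto_toReal hfin).comp hgel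
    refine this.congr fun k => ?_
    simp only [Function.comp]
    rw [← ENNReal.toReal_rpow]
    simp [coe_nnnorm]
  -- comparison sequences
  have hup : Tendsto (fun k : ℕ => r * ((b / a) ^ ((1:ℝ) / k))) atTop (𝓝 r) := by
    have := (aux_rpow_tendsto_one (b / a) (div_pos hb0 ha0)).const_mul r
    simpa using this
  have hlo : Tendsto (fun k : ℕ => s * ((a / b) ^ ((1:ℝ) / k))) atTop (𝓝 s) := by
    have := (aux_rpow_tendsto_one (a / b) (div_pos ha0 hb0)).const_mul s
    simpa using this
  have hev_up : ∀ᶠ k : ℕ in atTop, ‖Mc ^ k‖ ^ ((1:ℝ)/k) ≤ r * ((b / a) ^ ((1:ℝ) / k)) := by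
    filter_upwards [eventually_ge_atTop 1] with k hk
    have hk0 : (k : ℝ) ≠ 0 := Nat.cast_ne_zero.mpr (by omega)
    calc ‖Mc ^ k‖ ^ ((1:ℝ)/k) ≤ (r ^ k * (b / a)) ^ ((1:ℝ)/k) :=
          Real.rpow_le_rpow (norm_nonneg _) (hnle k) (by positivity)
      _ = r * ((b / a) ^ ((1:ℝ) / k)) := by
          rw [Real.mul_rpow (pow_nonneg hr0 k) (div_pos hb0 ha0).le,
            ← Real.rpow_natCast r k, ← Real.rpow_mul hr0,
            mul_one_div_cancel hk0, Real.rpow_one]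
  have hev_lo : ∀ᶠ k : ℕ in atTop, s * ((a / b) ^ ((1:ℝ) / k)) ≤ ‖Mc ^ k‖ ^ ((1:ℝ)/k) := by
    filter_upwards [eventually_ge_atTop 1] with k hk
    have hk0 : (k : ℝ) ≠ 0 := Nat.cast_ne_zero.mpr (by omega)
    calc s * ((a / b) ^ ((1:ℝ) / k))
        = (s ^ k * (a / b)) ^ ((1:ℝ)/k) := by
          rw [Real.mul_rpow (pow_nonneg hs0 k) (div_pos ha0 hb0).le,
            ← Real.rpow_natCast s k, ← Real.rpow_mul hs0,
            mul_one_div_cancel hk0, Real.rpow_one]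
      _ ≤ ‖Mc ^ k‖ ^ ((1:ℝ)/k) :=
          Real.rpow_le_rpow (by positivity) (hnge k) (by positivity)
  constructor
  · exact le_of_tendsto_of_tendsto hlo hreal hev_lo
  · exact le_of_tendsto_of_tendsto hreal hup hev_up
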